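/- The distance between channels satisfies the triangle inequality: if C₁, C₂, C₃ are channels of a partial permutation w, then h(C₁,C₃) ≤ h(C₁,C₂) + h(C₂,C₃); moreover if C₁ ≤_SW C₂ ≤_SW C₃ then equality holds. -/

import Mathlib

/-- A stream (for period `n`): a set of balls closed under translation by
`(n, n)`, forming the graph of a strictly increasing partial function. -/
def IsStream (n : ℕ) (S : Set (ℤ × ℤ)) : Prop :=
  (∀ b : ℤ × ℤ, b ∈ S ↔ (b.1 + n, b.2 + n) ∈ S) ∧
  (∀ b b' : ℤ × ℤ, b ∈ S → b' ∈ S → b.1 < b'.1 → b.2 < b'.2) ∧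
  (∀ b b' : ℤ × ℤ, b ∈ S → b' ∈ S → b.1 = b'.1 → b = b')

/-- The density of a stream: the number of `x`-coordinates in `[1, n]`. -/
noncomputable def streamDensity (n : ℕ) (S : Set (ℤ × ℤ)) : ℕ :=
  Set.ncard {x : ℤ | 1 ≤ x ∧ x ≤ n ∧ ∃ y : ℤ, (x, y) ∈ S}

/-- The graph of a partial permutation (period `n`). -/
def IsPartialPerm (n : ℕ) (W : Set (ℤ × ℤ)) : Prop :=
  (∀ b : ℤ × ℤ, b ∈ W ↔ (b.1 + n, b.2 + n) ∈ W) ∧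
  (∀ b b' : ℤ × ℤ, b ∈ W → b' ∈ W → b.1 = b'.1 → b = b') ∧
  (∀ b b' : ℤ × ℤ, b ∈ W → b' ∈ W → b.2 = b'.2 → b = b')

/-- A channel of `W`: a stream contained in `W` of maximal density. -/
def IsChannel (n : ℕ) (W C : Set (ℤ × ℤ)) : Prop :=
  IsStream n C ∧ C ⊆ W ∧
  ∀ S : Set (ℤ × ℤ), IsStream n S → S ⊆ W → streamDensity n S ≤ streamDensity n C

/-- A path in `W` of length `k`: balls strictly increasing in both coordinates. -/
def IsPath (W : Set (ℤ × ℤ)) (k : ℕ) (p : ℕ → ℤ × ℤ) : Prop :=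
  (∀ i : ℕ, i ≤ k → p i ∈ W) ∧
  (∀ i : ℕ, i < k → (p i).1 < (p (i + 1)).1 ∧ (p i).2 < (p (i + 1)).2)

/-- A channel numbering `d = d^C` of `W` relative to the channel `C`: `d`
restricts to a proper numbering of `C`, and for every ball `b ∈ W`, `d b` is
the maximum of `d b' + k` over paths `(b' = b₀, …, b_k = b)` with `b' ∈ C`. -/
def IsChannelNumbering (n : ℕ) (W C : Set (ℤ × ℤ)) (d : ℤ × ℤ → ℤ) : Prop :=
  (∀ b b' : ℤ × ℤ, b ∈ C → b' ∈ C → b.1 < b'.1 → d b < d b') ∧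
  (∀ b : ℤ × ℤ, b ∈ C → d (b.1 + n, b.2 + n) = d b + (streamDensity n C : ℤ)) ∧
  (∀ b ∈ W,
    IsGreatest
      {m : ℤ | ∃ (k : ℕ) (p : ℕ → ℤ × ℤ),
        IsPath W k p ∧ p 0 ∈ C ∧ p k = b ∧ m = d (p 0) + (k : ℤ)}
      (d b))

/-- `C ≤_SW C'`: every ball of `C` is weakly southwest of some ball of `C'`. -/
def SWle (C C' : Set (ℤ × ℤ)) : Prop :=
  ∀ b ∈ C, ∃ b' ∈ C', b'.1 ≤ b.1 ∧ b.2 ≤ b'.2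

namespace Stmt16

/-- translation by `k·(n,n)` -/
def tr (n : ℕ) (k : ℤ) (b : ℤ × ℤ) : ℤ × ℤ := (b.1 + k * n, b.2 + k * n)

lemma tr_add (n : ℕ) (k : ℤ) (b : ℤ × ℤ) :
    tr n (k + 1) b = ((tr n k b).1 + n, (tr n k b).2 + n) := by
  simp [tr]; constructor <;> ring

lemma tr_sub (n : ℕ) (k : ℤ) (b : ℤ × ℤ) :
    tr n k b = ((tr n (k - 1) b).1 + n, (tr n (k - 1) b).2 + n) := by
  simp [tr]; constructor <;> ring

/-- membership is preserved by all translations, for periodic sets -/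
lemma mem_tr {n : ℕ} {S : Set (ℤ × ℤ)}
    (hS : ∀ b : ℤ × ℤ, b ∈ S ↔ (b.1 + n, b.2 + n) ∈ S) (k : ℤ) (b : ℤ × ℤ) :
    b ∈ S ↔ tr n k b ∈ S := by
  induction k using Int.induction_on with
  | zero => simp [tr]
  | succ i ih =>
      rw [ih, tr_add]
      exact hS (tr n i b)
  | pred i ih =>
      rw [ih]
      rw [show tr n (-i : ℤ) b = ((tr n (-i - 1) b).1 + n, (tr n (-i-1) b).2 + n) from tr_sub n (-i) b]
      exact (hS (tr n (-i - 1) b)).symm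

/-- a representative can be shifted into any half-open window of length n -/
lemma exists_shift {n : ℕ} (hn : 0 < n) (a v : ℤ) :
    ∃ k : ℤ, a < v + k * n ∧ v + k * n ≤ a + n := by
  have hn' : (0 : ℤ) < (n : ℤ) := by exact_mod_cast hn
  refine ⟨(a + n - v) / n, ?_, ?_⟩
  · have h1 : (a + n - v) % n < n := Int.emod_lt_of_pos _ hn'
    have h2 : (n : ℤ) * ((a + n - v) / n) + (a + n - v) % n = a + n - v :=
      Int.mul_ediv_add_emod _ _
    nlinarith [h1, h2]
  · have h1 : 0 ≤ (a + n - v) % n := Int.emod_nonneg _ (by positivity)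
    have h2 : (n : ℤ) * ((a + n - v) / n) + (a + n - v) % n = a + n - v :=
      Int.mul_ediv_add_emod _ _
    nlinarith [h1, h2]

section Stream
variable {n : ℕ} {W S : Set (ℤ × ℤ)}

/-- in a stream, smaller second coordinate implies smaller first coordinate -/
lemma stream_y_lt (hS : IsStream n S) {b b' : ℤ × ℤ} (hb : b ∈ S) (hb' : b' ∈ S)
    (h : b.2 < b'.2) : b.1 < b'.1 := by
  rcases lt_trichotomy b.1 b'.1 with h1 | h1 | h1
  · exact h1
  · have heq := hS.2.2 b b' hb hb' h1
    rw [heq] at h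
    exact absurd h (lt_irrefl _)
  · exact absurd (hS.2.1 b' b hb' hb h1) (by omega)

/-- y-injectivity inside W -/
lemma y_inj (hW : IsPartialPerm n W) {b b' : ℤ × ℤ} (hb : b ∈ W) (hb' : b' ∈ W)
    (h : b.2 = b'.2) : b = b' := hW.2.2 b b' hb hb' h

lemma x_inj (hW : IsPartialPerm n W) {b b' : ℤ × ℤ} (hb : b ∈ W) (hb' : b' ∈ W)
    (h : b.1 = b'.1) : b = b' := hW.2.1 b b' hb hb' h

end Stream

section Paths
variable {n : ℕ} {W C : Set (ℤ × ℤ)} {d : ℤ × ℤ → ℤ}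

lemma isPath_single {W : Set (ℤ × ℤ)} {z b : ℤ × ℤ} (hz : z ∈ W) (hb : b ∈ W)
    (h1 : z.1 < b.1) (h2 : z.2 < b.2) :
    IsPath W 1 (fun i => if i = 0 then z else b) := by
  constructor
  · intro i _
    by_cases h : i = 0 <;> simp [h, hz, hb]
  · intro i hi
    interval_cases i
    simpa using ⟨h1, h2⟩

/-- value monotonicity along paths: if there is a path of length ℓ from z to b then
`d z + ℓ ≤ d b`. -/
lemma path_value_le (hd : IsChannelNumbering n W C d) {z b : ℤ × ℤ}
    (hz : z ∈ W) (hb : b ∈ W) {ℓ : ℕ} {q : ℕ → ℤ × ℤ}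
    (hq : IsPath W ℓ q) (hq0 : q 0 = z) (hqℓ : q ℓ = b) :
    d z + ℓ ≤ d b := by
  obtain ⟨k, p, hp, hp0, hpk, hval⟩ := (hd.2.2 z hz).1
  have hmem : d (p 0) + ((k + ℓ : ℕ) : ℤ) ∈
      {m : ℤ | ∃ (k : ℕ) (p : ℕ → ℤ × ℤ),
        IsPath W k p ∧ p 0 ∈ C ∧ p k = b ∧ m = d (p 0) + (k : ℤ)} := by
    refine ⟨k + ℓ, fun i => if i ≤ k then p i else q (i - k), ?_, ?_, ?_, ?_⟩
    · constructor
      · intro i hi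
        by_cases h : i ≤ k
        · simpa [h] using hp.1 i h
        · simp only [h, if_false]
          exact hq.1 (i - k) (by omega)
      · intro i hi
        by_cases h : i + 1 ≤ k
        · have h' : i ≤ k := by omega
          simpa [h, h'] using hp.2 i (by omega)
        · by_cases h' : i ≤ k
          · -- i = k
            have hik : i = k := by omega
            have hl : 1 ≤ ℓ := by omega
            have : q 0 = p k := by rw [hq0, hpk]
            simp only [h', if_true, h, if_false, hik]
            have hstep := hq.2 0 (by omega)
            simp only [show k + 1 - k = 1 by omega]
            rw [← hpk, ← hq0] at *
            simpa [this.symm] using hstep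
          · have e1 : i + 1 - k = (i - k) + 1 := by omega
            simp only [h, h', if_false, e1]
            exact hq.2 (i - k) (by omega)
    · simpa [Nat.zero_le] using hp0
    · by_cases hl : ℓ = 0
      · subst hl
        show (if k + 0 ≤ k then p (k+0) else q (k + 0 - k)) = b
        simp only [Nat.add_zero, le_refl, if_true, hpk]
        rw [← hq0, hqℓ]
      · have hkl : ¬ (k + ℓ ≤ k) := by omega
        show (if k + ℓ ≤ k then p (k+ℓ) else q (k + ℓ - k)) = b
        simp only [hkl, if_false, Nat.add_sub_cancel_left, hqℓ]
    · show d (p 0) + ((k+ℓ:ℕ) : ℤ) = d (if 0 ≤ k then p 0 else q (0 - k)) + ((k+ℓ:ℕ) : ℤ)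
      simp [Nat.zero_le]
  have hub := (hd.2.2 b hb).2 hmem
  have : d z = d (p 0) + (k : ℤ) := hval
  push_cast at hub ⊢
  omega

lemma step_le (hd : IsChannelNumbering n W C d) {z b : ℤ × ℤ}
    (hz : z ∈ W) (hb : b ∈ W) (h1 : z.1 < b.1) (h2 : z.2 < b.2) :
    d z + 1 ≤ d b := by
  have := path_value_le hd hz hb (isPath_single hz hb h1 h2) (by simp) (by simp)
  simpa using this

/-- prefix values of a maximal path -/
lemma prefix_exact (hd : IsChannelNumbering n W C d) {k : ℕ} {p : ℕ → ℤ × ℤ} {b : ℤ × ℤ}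
    (hb : b ∈ W) (hp : IsPath W k p) (hp0 : p 0 ∈ C) (hpk : p k = b)
    (hval : d b = d (p 0) + k) {i : ℕ} (hi : i ≤ k) :
    d (p i) = d (p 0) + i := by
  have hpiW : p i ∈ W := hp.1 i hi
  -- lower bound: prefix path
  have hlow : d (p 0) + (i : ℤ) ≤ d (p i) := by
    have hmem : d (p 0) + (i : ℤ) ∈
        {m : ℤ | ∃ (k : ℕ) (p' : ℕ → ℤ × ℤ),
          IsPath W k p' ∧ p' 0 ∈ C ∧ p' k = p i ∧ m = d (p' 0) + (k : ℤ)} := by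
      exact ⟨i, p, ⟨fun j hj => hp.1 j (le_trans hj hi), fun j hj => hp.2 j (by omega)⟩,
        hp0, rfl, rfl⟩
    exact ((hd.2.2 (p i) hpiW).2 hmem)
  -- upper bound: suffix path
  have hup : d (p i) + ((k - i : ℕ) : ℤ) ≤ d b := by
    refine path_value_le hd hpiW hb (ℓ := k - i) (q := fun j => p (i + j)) ?_ (by simp) ?_
    · constructor
      · intro j hj; exact hp.1 (i + j) (by omega)
      · intro j hj
        have e : i + (j + 1) = (i + j) + 1 := by omega
        simpa [e] using hp.2 (i + j) (by omega)
    · simp only [show i + (k - i) = k by omega, hpk]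
  have hc : ((k - i : ℕ) : ℤ) = (k : ℤ) - (i : ℤ) := by
    have : (i : ℤ) ≤ (k : ℤ) := by exact_mod_cast hi
    push_cast [Nat.cast_sub hi]; ring
  omega

end Paths

end Stmt16

namespace Stmt16

section Shift
variable {n : ℕ} {W C : Set (ℤ × ℤ)} {d : ℤ × ℤ → ℤ}

/-- translation of values: `d (b + (n,n)) = d b + density` for every `b ∈ W`. -/
lemma num_shift (hW : IsPartialPerm n W) (hC : IsStream n C)
    (hd : IsChannelNumbering n W C d) {b : ℤ × ℤ} (hb : b ∈ W) :
    d (b.1 + n, b.2 + n) = d b + (streamDensity n C : ℤ) := by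
  set m : ℤ := (streamDensity n C : ℤ) with hm
  have hb' : (b.1 + n, b.2 + n) ∈ W := (hW.1 b).mp hb
  set T : Set ℤ := {x : ℤ | ∃ (k : ℕ) (p : ℕ → ℤ × ℤ),
      IsPath W k p ∧ p 0 ∈ C ∧ p k = (b.1 + n, b.2 + n) ∧ x = d (p 0) + (k : ℤ)} with hT
  have hGb := hd.2.2 b hb
  have hGb' := hd.2.2 (b.1 + n, b.2 + n) hb'
  have hmem : d b + m ∈ T := by
    obtain ⟨k, p, hp, hp0, hpk, hval⟩ := hGb.1
    refine ⟨k, fun i => ((p i).1 + n, (p i).2 + n), ?_, ?_, ?_, ?_⟩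
    · constructor
      · intro i hi; exact (hW.1 (p i)).mp (hp.1 i hi)
      · intro i hi
        have := hp.2 i hi
        constructor <;> simp <;> omega
    · exact (hC.1 (p 0)).mp hp0
    · show ((p k).1 + (n:ℤ), (p k).2 + (n:ℤ)) = (b.1 + n, b.2 + n)
      rw [hpk]
    · have := hd.2.1 (p 0) hp0
      rw [this, hval]; ring
  have hub : ∀ x ∈ T, x ≤ d b + m := by
    rintro x ⟨k, q, hq, hq0, hqk, hx⟩
    set q' : ℕ → ℤ × ℤ := fun i => ((q i).1 - n, (q i).2 - n) with hq'
    have hqW : ∀ i, i ≤ k → q' i ∈ W := by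
      intro i hi
      have : ((q' i).1 + n, (q' i).2 + n) = q i := by simp [hq']
      exact (hW.1 (q' i)).mpr (this ▸ hq.1 i hi)
    have hq'path : IsPath W k q' := by
      constructor
      · exact hqW
      · intro i hi
        have := hq.2 i hi
        constructor <;> simp [hq'] <;> omega
    have hq'0 : q' 0 ∈ C := by
      have : ((q' 0).1 + n, (q' 0).2 + n) = q 0 := by simp [hq']
      exact (hC.1 (q' 0)).mpr (this ▸ hq0)
    have hq'k : q' k = b := by
      have h1 : (q k).1 = b.1 + n := by rw [hqk]
      have h2 : (q k).2 = b.2 + n := by rw [hqk]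
      simp [hq', h1, h2]
    have hle : d (q' 0) + (k : ℤ) ≤ d b := hGb.2 ⟨k, q', hq'path, hq'0, hq'k, rfl⟩
    have hshift : d (q 0) = d (q' 0) + m := by
      have := hd.2.1 (q' 0) hq'0
      have he : ((q' 0).1 + n, (q' 0).2 + n) = q 0 := by simp [hq']
      rw [he] at this
      exact this
    rw [hx, hshift]
    omega
  exact IsGreatest.unique hGb' ⟨hmem, hub⟩

end Shift

section Counting
variable {n : ℕ} {W C : Set (ℤ × ℤ)}

lemma int_window_unique {n : ℕ} (j : ℤ) (a : ℤ) {v v' : ℤ} (h : v' = v + j * n)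
    (hv1 : a < v) (hv2 : v ≤ a + n) (hv1' : a < v') (hv2' : v' ≤ a + n) : v' = v := by
  rcases lt_trichotomy j 0 with hj | hj | hj
  · exfalso; nlinarith [hj, h, hv1, hv2', mul_le_mul_of_nonneg_right (show j ≤ -1 by omega) (show (0:ℤ) ≤ n by positivity)]
  · simp [hj] at h; omega
  · exfalso; nlinarith [mul_le_mul_of_nonneg_right (show (1:ℤ) ≤ j by omega) (show (0:ℤ) ≤ n by positivity)]

lemma tr_comp (n : ℕ) (k j : ℤ) (b : ℤ × ℤ) : tr n k (tr n j b) = tr n (k + j) b := by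
  simp [tr]; constructor <;> ring

lemma window_finite (hW : IsPartialPerm n W) (hCW : C ⊆ W) (a b : ℤ) :
    {c ∈ C | a < c.2 ∧ c.2 ≤ b}.Finite := by
  apply Set.Finite.of_finite_image (f := fun c => c.2)
  · apply Set.Finite.subset (Set.finite_Ioc a b)
    rintro y ⟨c, ⟨_, h1, h2⟩, rfl⟩
    exact ⟨h1, h2⟩
  · intro c hc c' hc' h
    exact y_inj hW (hCW hc.1) (hCW hc'.1) h

/-- the number of balls of a stream in any half-open `y`-window of length `n`
equals the stream density. -/
lemma count_window (hn : 0 < n) (hW : IsPartialPerm n W) (hC : IsStream n C) (hCW : C ⊆ W)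
    (a : ℤ) : {c ∈ C | a < c.2 ∧ c.2 ≤ a + n}.ncard = streamDensity n C := by
  classical
  set X : Set (ℤ × ℤ) := {c ∈ C | 1 ≤ c.1 ∧ c.1 ≤ n} with hX
  set Y : Set (ℤ × ℤ) := {c ∈ C | a < c.2 ∧ c.2 ≤ a + n} with hY
  -- X is finite
  have hXfin : X.Finite := by
    apply Set.Finite.of_finite_image (f := fun c => c.1)
    · apply Set.Finite.subset (Set.finite_Icc (1:ℤ) n)
      rintro x ⟨c, ⟨_, h1, h2⟩, rfl⟩
      exact ⟨h1, h2⟩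
    · intro c hc c' hc' h
      exact hC.2.2 c c' hc.1 hc'.1 h
  -- the bijection X → Y via y-normalization
  have hbij : Set.BijOn (fun c : ℤ × ℤ => tr n (Classical.choose (exists_shift hn a c.2)) c) X Y := by
    constructor
    · intro c hc
      obtain ⟨h1, h2⟩ := Classical.choose_spec (exists_shift hn a c.2)
      refine ⟨(mem_tr hC.1 _ c).mp hc.1, ?_, ?_⟩
      · simpa [tr] using h1
      · simpa [tr] using h2
    constructor
    · intro c hc c' hc' h
      have h1 : tr n (Classical.choose (exists_shift hn a c.2)) c
          = tr n (Classical.choose (exists_shift hn a c'.2)) c' := h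
      set k := Classical.choose (exists_shift hn a c.2) with hk
      set k' := Classical.choose (exists_shift hn a c'.2) with hk'
      have h2 : c.1 + k * n = c'.1 + k' * n := congrArg Prod.fst h1
      have hx : c'.1 = c.1 + (k - k') * n := by
        have he : (k - k') * (n:ℤ) = k * n - k' * n := by ring
        linarith [h2, he]
      have hxx : c'.1 = c.1 :=
        int_window_unique (k - k') 0 hx (by linarith [hc.2.1]) (by linarith [hc.2.2])
          (by linarith [hc'.2.1]) (by linarith [hc'.2.2])
      exact (hC.2.2 c' c hc'.1 hc.1 hxx).symm
    · intro c hc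
      -- surjectivity: normalize x-coordinate into [1, n]
      obtain ⟨k₀, hk₀1, hk₀2⟩ := exists_shift hn 0 c.1
      set c₀ : ℤ × ℤ := tr n k₀ c with hc₀
      have hc₀C : c₀ ∈ C := (mem_tr hC.1 k₀ c).mp hc.1
      have hc₀X : c₀ ∈ X := by
        refine ⟨hc₀C, ?_, ?_⟩
        · have : (c₀).1 = c.1 + k₀ * n := rfl
          omega
        · have : (c₀).1 = c.1 + k₀ * n := rfl
          omega
      refine ⟨c₀, hc₀X, ?_⟩
      -- the normalization of c₀ lands back at c
      set k := Classical.choose (exists_shift hn a c₀.2)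
      obtain ⟨h1, h2⟩ := Classical.choose_spec (exists_shift hn a c₀.2)
      have he : tr n k c₀ = tr n (k + k₀) c := tr_comp n k k₀ c
      have hy : (tr n k c₀).2 = c.2 + (k + k₀) * n := by rw [he]; rfl
      have : (tr n k c₀).2 = c.2 :=
        int_window_unique (k + k₀) a hy hc.2.1 hc.2.2
          (by simpa [tr] using h1) (by simpa [tr] using h2)
      have hzero : (k + k₀) * (n:ℤ) = 0 := by
        have h4 : (tr n k c₀).2 = c.2 + (k + k₀) * n := hy
        linarith [this, h4]
      have hxeq : (tr n k c₀).1 = c.1 := by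
        have h3 : (tr n k c₀).1 = c.1 + (k + k₀) * n := by rw [he]; rfl
        rw [hzero] at h3
        simpa using h3
      have : tr n k c₀ = c := by
        apply Prod.ext hxeq this
      exact this
  have h1 : Y.ncard = X.ncard := by
    rw [← hbij.image_eq]
    exact Set.ncard_image_of_injOn hbij.injOn
  have h2 : X.ncard = streamDensity n C := by
    rw [streamDensity]
    have himg : (fun c : ℤ × ℤ => c.1) '' X = {x : ℤ | 1 ≤ x ∧ x ≤ n ∧ ∃ y : ℤ, (x, y) ∈ C} := by
      ext x
      constructor
      · rintro ⟨c, ⟨hcC, h1, h2⟩, rfl⟩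
        exact ⟨h1, h2, c.2, by simpa using hcC⟩
      · rintro ⟨h1, h2, y, hy⟩
        exact ⟨(x, y), ⟨hy, h1, h2⟩, rfl⟩
    rw [← himg]
    exact (Set.ncard_image_of_injOn (fun c hc c' hc' h => hC.2.2 c c' hc.1 hc'.1 h)).symm
  rw [h1, h2]

end Counting

end Stmt16

namespace Stmt16

section Proper
variable {n : ℕ} {W C C' : Set (ℤ × ℤ)} {d : ℤ × ℤ → ℤ}

/-- monotonicity of any channel numbering along any stream contained in W -/
lemma mono_yC (hC : IsStream n C) (hCW : C ⊆ W) (hd : IsChannelNumbering n W C' d)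
    {c c' : ℤ × ℤ} (hc : c ∈ C) (hc' : c' ∈ C) (h : c.2 < c'.2) :
    d c + 1 ≤ d c' :=
  step_le hd (hCW hc) (hCW hc') (stream_y_lt hC hc hc' h) h

lemma claim_ge (hW : IsPartialPerm n W) (hC : IsStream n C) (hCW : C ⊆ W)
    (hd : IsChannelNumbering n W C' d) :
    ∀ N : ℕ, ∀ c c' : ℤ × ℤ, c ∈ C → c' ∈ C → c.2 < c'.2 →
      ({b ∈ C | c.2 < b.2 ∧ b.2 ≤ c'.2}).ncard = N → (N : ℤ) ≤ d c' - d c := by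
  intro N
  induction N using Nat.strong_induction_on with
  | _ N ih =>
    intro c c' hc hc' hy hcard
    set M : Set (ℤ × ℤ) := {b ∈ C | c.2 < b.2 ∧ b.2 ≤ c'.2} with hM
    have hMfin : M.Finite := window_finite hW hCW c.2 c'.2
    have hc'M : c' ∈ M := ⟨hc', hy, le_refl _⟩
    have hN1 : 1 ≤ N := by
      rw [← hcard]
      exact (Set.ncard_pos hMfin).mpr ⟨c', hc'M⟩
    set T : Set (ℤ × ℤ) := M \ {c'} with hT
    by_cases hTe : T = ∅
    · have hM1 : M = {c'} := by
        apply subset_antisymm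
        · intro b hb
          by_contra hne
          have hbT : b ∈ T := ⟨hb, hne⟩
          rw [hTe] at hbT
          exact hbT
        · intro b hb
          simp only [Set.mem_singleton_iff] at hb
          rw [hb]; exact hc'M
      have : N = 1 := by rw [← hcard, hM1, Set.ncard_singleton]
      subst this
      have := mono_yC hC hCW hd hc hc' hy
      push_cast
      omega
    · have hTne : T.Nonempty := Set.nonempty_iff_ne_empty.mpr hTe
      have hTfin : T.Finite := hMfin.subset Set.diff_subset
      obtain ⟨b₀, hb₀T, hmax⟩ := Set.exists_max_image T (fun b => b.2) hTfin hTne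
      have hb₀M : b₀ ∈ M := hb₀T.1
      have hb₀ne : b₀ ≠ c' := by
        intro h; exact hb₀T.2 (by simp [h])
      have hb₀lt : b₀.2 < c'.2 := by
        rcases lt_or_eq_of_le hb₀M.2.2 with h | h
        · exact h
        · exact absurd (y_inj hW (hCW hb₀M.1) (hCW hc') h) hb₀ne
      have hTset : {b ∈ C | c.2 < b.2 ∧ b.2 ≤ b₀.2} = T := by
        ext b
        constructor
        · rintro ⟨hbC, h1, h2⟩
          refine ⟨⟨hbC, h1, le_trans h2 (le_of_lt hb₀lt)⟩, ?_⟩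
          intro hbe
          simp only [Set.mem_singleton_iff] at hbe
          rw [hbe] at h2
          omega
        · rintro ⟨⟨hbC, h1, _⟩, hne⟩
          exact ⟨hbC, h1, hmax b ⟨⟨hbC, h1, ‹b.2 ≤ c'.2›⟩, hne⟩⟩
      have hcardT : T.ncard = N - 1 := by
        rw [hT, Set.ncard_diff_singleton_of_mem hc'M, hcard]
      have hyb : c.2 < b₀.2 := hb₀M.2.1
      have hih := ih (N - 1) (by omega) c b₀ hc hb₀M.1 hyb (by rw [hTset]; exact hcardT)
      have hstep := mono_yC hC hCW hd hb₀M.1 hc' hb₀lt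
      have : ((N - 1 : ℕ) : ℤ) = (N : ℤ) - 1 := by
        push_cast [Nat.cast_sub hN1]; ring
      omega

/-- properness: a channel numbering increases by exactly 1 between consecutive
balls of any channel -/
lemma properness (hn : 0 < n) (hW : IsPartialPerm n W) (hC : IsStream n C) (hCW : C ⊆ W)
    (hd : IsChannelNumbering n W C' d)
    (hshift : ∀ c ∈ C, d (c.1 + n, c.2 + n) = d c + (streamDensity n C : ℤ))
    {c c' : ℤ × ℤ} (hc : c ∈ C) (hc' : c' ∈ C) (hy : c.2 < c'.2)
    (hcons : ∀ b ∈ C, ¬(c.2 < b.2 ∧ b.2 < c'.2)) :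
    d c' = d c + 1 := by
  have hge := mono_yC hC hCW hd hc hc' hy
  set c'' : ℤ × ℤ := (c.1 + n, c.2 + n) with hc''
  have hc''C : c'' ∈ C := (hC.1 c).mp hc
  have hdc'' : d c'' = d c + (streamDensity n C : ℤ) := hshift c hc
  have hnz : (0 : ℤ) < (n : ℤ) := by exact_mod_cast hn
  have hc'le : c'.2 ≤ c.2 + n := by
    by_contra hlt
    push_neg at hlt
    exact hcons c'' hc''C ⟨by simp [hc'']; omega, by simp [hc'']; omega⟩
  have hcount : ({b ∈ C | c.2 < b.2 ∧ b.2 ≤ c.2 + n}).ncard = streamDensity n C := count_window hn hW hC hCW c.2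
  rcases lt_or_eq_of_le hc'le with hlt | heq
  · -- c'.2 < c.2 + n
    set M₁ : Set (ℤ × ℤ) := {b ∈ C | c'.2 < b.2 ∧ b.2 ≤ c.2 + n} with hM₁
    have hsplit : {b ∈ C | c.2 < b.2 ∧ b.2 ≤ c.2 + (n:ℤ)} = insert c' M₁ := by
      ext b
      constructor
      · rintro ⟨hbC, h1, h2⟩
        rcases lt_trichotomy b.2 c'.2 with h | h | h
        · exact absurd ⟨h1, h⟩ (hcons b hbC)
        · exact Or.inl (y_inj hW (hCW hbC) (hCW hc') h)
        · exact Or.inr ⟨hbC, h, h2⟩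
      · rintro (rfl | ⟨hbC, h1, h2⟩)
        · exact ⟨hc', hy, hc'le⟩
        · exact ⟨hbC, lt_trans hy h1, h2⟩
    have hM₁fin : M₁.Finite := window_finite hW hCW c'.2 (c.2 + n)
    have hninsert : c' ∉ M₁ := by
      rintro ⟨_, h1, _⟩; omega
    have hcard₁ : M₁.ncard = streamDensity n C - 1 := by
      have := hcount
      rw [hsplit, Set.ncard_insert_of_notMem hninsert hM₁fin] at this
      omega
    have hc''y : c'.2 < c''.2 := by simp [hc'']; omega
    have hge2 := claim_ge hW hC hCW hd (streamDensity n C - 1) c' c'' hc' hc''C hc''y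
      (by
        have : c''.2 = c.2 + (n:ℤ) := rfl
        rw [this]
        exact hcard₁)
    have hm1 : 1 ≤ streamDensity n C := by
      have hpos := (Set.ncard_pos (window_finite hW hCW c.2 (c.2 + (n:ℤ)))).mpr
        (⟨c', ⟨hc', hy, hc'le⟩⟩ : ({b ∈ C | c.2 < b.2 ∧ b.2 ≤ c.2 + (n:ℤ)}).Nonempty)
      omega
    have hcast : ((streamDensity n C - 1 : ℕ) : ℤ) = (streamDensity n C : ℤ) - 1 := by
      push_cast [Nat.cast_sub hm1]; ring
    omega
  · -- c'.2 = c.2 + n, so c' = c''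
    have hcc : c' = c'' := y_inj hW (hCW hc') (hCW hc''C) (by simp [hc'']; omega)
    have hM1 : {b ∈ C | c.2 < b.2 ∧ b.2 ≤ c.2 + (n:ℤ)} = {c'} := by
      ext b
      constructor
      · rintro ⟨hbC, h1, h2⟩
        rcases lt_trichotomy b.2 c'.2 with h | h | h
        · exact absurd ⟨h1, h⟩ (hcons b hbC)
        · exact y_inj hW (hCW hbC) (hCW hc') h
        · exfalso; omega
      · rintro rfl
        exact ⟨hc', hy, hc'le⟩
    have hone : streamDensity n C = 1 := by rw [← hcount, hM1, Set.ncard_singleton]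
    have hone' : (streamDensity n C : ℤ) = 1 := by exact_mod_cast hone
    rw [hcc, hdc'']
    omega

lemma claim_eq (hn : 0 < n) (hW : IsPartialPerm n W) (hC : IsStream n C) (hCW : C ⊆ W)
    (hd : IsChannelNumbering n W C' d)
    (hshift : ∀ c ∈ C, d (c.1 + n, c.2 + n) = d c + (streamDensity n C : ℤ)) :
    ∀ N : ℕ, ∀ c c' : ℤ × ℤ, c ∈ C → c' ∈ C → c.2 < c'.2 →
      ({b ∈ C | c.2 < b.2 ∧ b.2 ≤ c'.2}).ncard = N → d c' - d c = (N : ℤ) := by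
  intro N
  induction N using Nat.strong_induction_on with
  | _ N ih =>
    intro c c' hc hc' hy hcard
    set M : Set (ℤ × ℤ) := {b ∈ C | c.2 < b.2 ∧ b.2 ≤ c'.2} with hM
    have hMfin : M.Finite := window_finite hW hCW c.2 c'.2
    have hc'M : c' ∈ M := ⟨hc', hy, le_refl _⟩
    have hN1 : 1 ≤ N := by
      rw [← hcard]
      exact (Set.ncard_pos hMfin).mpr ⟨c', hc'M⟩
    set T : Set (ℤ × ℤ) := M \ {c'} with hT
    by_cases hTe : T = ∅
    · have hM1 : M = {c'} := by
        apply subset_antisymm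
        · intro b hb
          by_contra hne
          have hbT : b ∈ T := ⟨hb, hne⟩
          rw [hTe] at hbT
          exact hbT
        · intro b hb
          simp only [Set.mem_singleton_iff] at hb
          rw [hb]; exact hc'M
      have hN : N = 1 := by rw [← hcard, hM1, Set.ncard_singleton]
      subst hN
      have hcons : ∀ b ∈ C, ¬(c.2 < b.2 ∧ b.2 < c'.2) := by
        rintro b hbC ⟨h1, h2⟩
        have : b ∈ M := ⟨hbC, h1, le_of_lt h2⟩
        rw [hM1] at this
        simp only [Set.mem_singleton_iff] at this
        rw [this] at h2
        omega
      have := properness hn hW hC hCW hd hshift hc hc' hy hcons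
      push_cast
      omega
    · have hTne : T.Nonempty := Set.nonempty_iff_ne_empty.mpr hTe
      have hTfin : T.Finite := hMfin.subset Set.diff_subset
      obtain ⟨b₀, hb₀T, hmax⟩ := Set.exists_max_image T (fun b => b.2) hTfin hTne
      have hb₀M : b₀ ∈ M := hb₀T.1
      have hb₀ne : b₀ ≠ c' := by
        intro h; exact hb₀T.2 (by simp [h])
      have hb₀lt : b₀.2 < c'.2 := by
        rcases lt_or_eq_of_le hb₀M.2.2 with h | h
        · exact h
        · exact absurd (y_inj hW (hCW hb₀M.1) (hCW hc') h) hb₀ne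
      have hTset : {b ∈ C | c.2 < b.2 ∧ b.2 ≤ b₀.2} = T := by
        ext b
        constructor
        · rintro ⟨hbC, h1, h2⟩
          refine ⟨⟨hbC, h1, le_trans h2 (le_of_lt hb₀lt)⟩, ?_⟩
          intro hbe
          simp only [Set.mem_singleton_iff] at hbe
          rw [hbe] at h2
          omega
        · rintro ⟨⟨hbC, h1, _⟩, hne⟩
          exact ⟨hbC, h1, hmax b ⟨⟨hbC, h1, ‹b.2 ≤ c'.2›⟩, hne⟩⟩
      have hcardT : T.ncard = N - 1 := by
        rw [hT, Set.ncard_diff_singleton_of_mem hc'M, hcard]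
      have hyb : c.2 < b₀.2 := hb₀M.2.1
      have hih := ih (N - 1) (by omega) c b₀ hc hb₀M.1 hyb (by rw [hTset]; exact hcardT)
      have hcons : ∀ b ∈ C, ¬(b₀.2 < b.2 ∧ b.2 < c'.2) := by
        rintro b hbC ⟨h1, h2⟩
        have hbT : b ∈ T := by
          refine ⟨⟨hbC, lt_trans hb₀M.2.1 h1, le_of_lt h2⟩, ?_⟩
          intro hbe
          simp only [Set.mem_singleton_iff] at hbe
          rw [hbe] at h2
          omega
        have := hmax b hbT
        omega
      have hprop := properness hn hW hC hCW hd hshift hb₀M.1 hc' hb₀lt hcons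
      have : ((N - 1 : ℕ) : ℤ) = (N : ℤ) - 1 := by
        push_cast [Nat.cast_sub hN1]; ring
      omega

/-- two channel numberings have constant difference along any channel -/
lemma constancy (hn : 0 < n) (hW : IsPartialPerm n W) (hC : IsStream n C) (hCW : C ⊆ W)
    {C₁' C₂' : Set (ℤ × ℤ)} {d₁' d₂' : ℤ × ℤ → ℤ}
    (hd₁ : IsChannelNumbering n W C₁' d₁') (hd₂ : IsChannelNumbering n W C₂' d₂')
    (hshift₁ : ∀ c ∈ C, d₁' (c.1 + n, c.2 + n) = d₁' c + (streamDensity n C : ℤ))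
    (hshift₂ : ∀ c ∈ C, d₂' (c.1 + n, c.2 + n) = d₂' c + (streamDensity n C : ℤ))
    {c c' : ℤ × ℤ} (hc : c ∈ C) (hc' : c' ∈ C) :
    d₂' c' - d₁' c' = d₂' c - d₁' c := by
  rcases lt_trichotomy c.2 c'.2 with h | h | h
  · have h1 := claim_eq hn hW hC hCW hd₁ hshift₁ _ c c' hc hc' h rfl
    have h2 := claim_eq hn hW hC hCW hd₂ hshift₂ _ c c' hc hc' h rfl
    omega
  · rw [y_inj hW (hCW hc) (hCW hc') h]
  · have h1 := claim_eq hn hW hC hCW hd₁ hshift₁ _ c' c hc' hc h rfl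
    have h2 := claim_eq hn hW hC hCW hd₂ hshift₂ _ c' c hc' hc h rfl
    omega

end Proper

end Stmt16

namespace Stmt16

section Gamma
variable {n : ℕ} {W B : Set (ℤ × ℤ)} {d : ℤ × ℤ → ℤ}

lemma exists_gammaBelow (hn : 0 < n) (hW : IsPartialPerm n W) (hB : IsStream n B)
    (hBW : B ⊆ W) (hne : B.Nonempty) (t : ℤ) :
    ∃ g ∈ B, g.2 < t ∧ ∀ b ∈ B, b.2 < t → b.2 ≤ g.2 := by
  obtain ⟨c, hc⟩ := hne
  obtain ⟨k, hk1, hk2⟩ := exists_shift hn (t - 1 - n) c.2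
  set c' : ℤ × ℤ := tr n k c with hc'
  have hc'B : c' ∈ B := (mem_tr hB.1 k c).mp hc
  have hc'y : c'.2 = c.2 + k * n := rfl
  set S : Set (ℤ × ℤ) := {b ∈ B | c'.2 - 1 < b.2 ∧ b.2 ≤ t - 1} with hS
  have hSfin : S.Finite := window_finite hW hBW (c'.2 - 1) (t - 1)
  have hc'S : c' ∈ S := ⟨hc'B, by omega, by omega⟩
  obtain ⟨g, hgS, hmax⟩ := Set.exists_max_image S (fun b => b.2) hSfin ⟨c', hc'S⟩
  refine ⟨g, hgS.1, by have := hgS.2.2; omega, ?_⟩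
  intro b hbB hbt
  by_cases hb : c'.2 - 1 < b.2
  · exact hmax b ⟨hbB, hb, by omega⟩
  · have := hgS.2.1
    omega

lemma exists_gammaAbove (hn : 0 < n) (hW : IsPartialPerm n W) (hB : IsStream n B)
    (hBW : B ⊆ W) (hne : B.Nonempty) (t : ℤ) :
    ∃ f ∈ B, t < f.2 ∧ ∀ b ∈ B, t < b.2 → f.2 ≤ b.2 := by
  obtain ⟨c, hc⟩ := hne
  obtain ⟨k, hk1, hk2⟩ := exists_shift hn t c.2
  set c' : ℤ × ℤ := tr n k c with hc'
  have hc'B : c' ∈ B := (mem_tr hB.1 k c).mp hc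
  have hc'y : c'.2 = c.2 + k * n := rfl
  set S : Set (ℤ × ℤ) := {b ∈ B | t < b.2 ∧ b.2 ≤ c'.2} with hS
  have hSfin : S.Finite := window_finite hW hBW t c'.2
  have hc'S : c' ∈ S := ⟨hc'B, by omega, le_refl _⟩
  obtain ⟨f, hfS, hmin⟩ := Set.exists_min_image S (fun b => b.2) hSfin ⟨c', hc'S⟩
  refine ⟨f, hfS.1, hfS.2.1, ?_⟩
  intro b hbB hbt
  by_cases hb : b.2 ≤ c'.2
  · exact hmin b ⟨hbB, hbt, hb⟩
  · have := hfS.2.2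
    omega

/-- `z` lies (weakly) on the northwest side of the channel `B`:
the ball of `B` with least `y`-coordinate above `z` is strictly to the right. -/
def Nwi (B : Set (ℤ × ℤ)) (z : ℤ × ℤ) : Prop :=
  ∃ f ∈ B, z.2 < f.2 ∧ z.1 < f.1 ∧ ∀ b ∈ B, z.2 < b.2 → f.2 ≤ b.2

def Sei (B : Set (ℤ × ℤ)) (z : ℤ × ℤ) : Prop :=
  ∃ f ∈ B, z.2 < f.2 ∧ f.1 < z.1 ∧ ∀ b ∈ B, z.2 < b.2 → f.2 ≤ b.2

lemma nwi_or_sei (hn : 0 < n) (hW : IsPartialPerm n W) (hB : IsStream n B)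
    (hBW : B ⊆ W) (hne : B.Nonempty) {z : ℤ × ℤ} (hz : z ∈ W) (hzB : z ∉ B) :
    Nwi B z ∨ Sei B z := by
  obtain ⟨f, hfB, hf1, hf2⟩ := exists_gammaAbove hn hW hB hBW hne z.2
  rcases lt_trichotomy z.1 f.1 with h | h | h
  · exact Or.inl ⟨f, hfB, hf1, h, hf2⟩
  · exact absurd ((x_inj hW hz (hBW hfB) h) ▸ hfB) hzB
  · exact Or.inr ⟨f, hfB, hf1, h, hf2⟩

/-- duality: a ball of a channel `C'` with `SWle B C'` is on `B` or northwest of `B`. -/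
lemma duality (hn : 0 < n) (hW : IsPartialPerm n W) (hB : IsStream n B) (hBW : B ⊆ W)
    (hne : B.Nonempty) {C' : Set (ℤ × ℤ)} (hC' : IsStream n C') (hC'W : C' ⊆ W)
    (hSW : SWle B C') {z : ℤ × ℤ} (hz : z ∈ C') :
    z ∈ B ∨ Nwi B z := by
  by_cases hzB : z ∈ B
  · exact Or.inl hzB
  rcases nwi_or_sei hn hW hB hBW hne (hC'W hz) hzB with h | h
  · exact Or.inr h
  · exfalso
    obtain ⟨f, hfB, hf1, hf2, hf3⟩ := h
    obtain ⟨a', ha'C, ha'x, ha'y⟩ := hSW f hfB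
    have hzy : z.2 < a'.2 := lt_of_lt_of_le hf1 ha'y
    have := stream_y_lt hC' hz ha'C hzy
    omega

/-- a ball with a `B`-ball weakly to its northwest is on `B` or southeast of `B`. -/
lemma sei_of_witness (hn : 0 < n) (hW : IsPartialPerm n W) (hB : IsStream n B)
    (hBW : B ⊆ W) (hne : B.Nonempty) {z c : ℤ × ℤ} (hz : z ∈ W) (hcB : c ∈ B)
    (hx : c.1 ≤ z.1) (hy : z.2 ≤ c.2) :
    z ∈ B ∨ Sei B z := by
  by_cases hzB : z ∈ B
  · exact Or.inl hzB
  rcases nwi_or_sei hn hW hB hBW hne hz hzB with h | h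
  · exfalso
    obtain ⟨f, hfB, hf1, hf2, hf3⟩ := h
    have hzc : z.2 < c.2 := by
      rcases lt_or_eq_of_le hy with h' | h'
      · exact h'
      · exact absurd ((y_inj hW hz (hBW hcB) h') ▸ hcB) hzB
    have hfc : f.2 ≤ c.2 := hf3 c hcB hzc
    rcases lt_or_eq_of_le hfc with h' | h'
    · have := stream_y_lt hB hfB hcB h'
      omega
    · have : f = c := y_inj hW (hBW hfB) (hBW hcB) h'
      rw [this] at hf2
      omega
  · exact Or.inr h

/-- NW bound: if `z` is northwest of `B` then `d z ≤ d g` for the ball `g ∈ B`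
with greatest `y`-coordinate below `z`. -/
lemma nw_bound (hn : 0 < n) (hW : IsPartialPerm n W) (hB : IsStream n B) (hBW : B ⊆ W)
    {C' : Set (ℤ × ℤ)} (hd : IsChannelNumbering n W C' d)
    (hshift : ∀ c ∈ B, d (c.1 + n, c.2 + n) = d c + (streamDensity n B : ℤ))
    {z g : ℤ × ℤ} (hz : z ∈ W) (hzB : z ∉ B) (hnwi : Nwi B z)
    (hgB : g ∈ B) (hgy : g.2 < z.2) (hgmax : ∀ b ∈ B, b.2 < z.2 → b.2 ≤ g.2) :
    d z ≤ d g := by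
  obtain ⟨f, hfB, hf1, hf2, hf3⟩ := hnwi
  have hcons : ∀ b ∈ B, ¬(g.2 < b.2 ∧ b.2 < f.2) := by
    rintro b hbB ⟨h1, h2⟩
    rcases lt_trichotomy b.2 z.2 with h | h | h
    · exact absurd (hgmax b hbB h) (by omega)
    · exact hzB ((y_inj hW (hBW hbB) hz h) ▸ hbB)
    · exact absurd (hf3 b hbB h) (by omega)
  have hprop : d f = d g + 1 :=
    properness hn hW hB hBW hd hshift hgB hfB (by omega) hcons
  have hstep : d z + 1 ≤ d f := step_le hd hz (hBW hfB) hf2 hf1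
  omega

end Gamma

section Sandwich
variable {n : ℕ} {W : Set (ℤ × ℤ)}

lemma sandwich_lower {C C' : Set (ℤ × ℤ)} {d d' : ℤ × ℤ → ℤ} (hCW : C ⊆ W)
    (hd : IsChannelNumbering n W C d) (hd' : IsChannelNumbering n W C' d')
    {b : ℤ × ℤ} (hb : b ∈ W) :
    ∃ c ∈ C, d' c - d c ≤ d' b - d b := by
  obtain ⟨k, p, hp, hp0, hpk, hval⟩ := (hd.2.2 b hb).1
  refine ⟨p 0, hp0, ?_⟩
  have := path_value_le hd' (hCW hp0) hb hp rfl hpk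
  omega

/-- two channel numberings of the same channel differ by a global constant -/
lemma same_global (hn : 0 < n) (hW : IsPartialPerm n W) {C₃ : Set (ℤ × ℤ)}
    (hC₃ : IsStream n C₃) (hC₃W : C₃ ⊆ W) {d₃ d₃' : ℤ × ℤ → ℤ}
    (hd₃ : IsChannelNumbering n W C₃ d₃) (hd₃' : IsChannelNumbering n W C₃ d₃')
    {a₀ : ℤ × ℤ} (ha₀ : a₀ ∈ C₃) {b : ℤ × ℤ} (hb : b ∈ W) :
    d₃' b = d₃ b + (d₃' a₀ - d₃ a₀) := by
  set c₀ : ℤ := d₃' a₀ - d₃ a₀ with hc₀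
  have hconst : ∀ c ∈ C₃, d₃' c - d₃ c = c₀ := by
    intro c hc
    exact constancy hn hW hC₃ hC₃W hd₃ hd₃' (fun c hc => hd₃.2.1 c hc)
      (fun c hc => hd₃'.2.1 c hc) ha₀ hc
  have hG := hd₃'.2.2 b hb
  have hG' := hd₃.2.2 b hb
  apply IsGreatest.unique hG
  constructor
  · obtain ⟨k, p, hp, hp0, hpk, hval⟩ := hG'.1
    refine ⟨k, p, hp, hp0, hpk, ?_⟩
    have := hconst (p 0) hp0
    omega
  · rintro x ⟨k, p, hp, hp0, hpk, hval⟩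
    have h1 : d₃ (p 0) + (k : ℤ) ≤ d₃ b := hG'.2 ⟨k, p, hp, hp0, hpk, rfl⟩
    have := hconst (p 0) hp0
    omega

end Sandwich

end Stmt16

namespace Stmt16

section Reroute
variable {n : ℕ} {W A B : Set (ℤ × ℤ)} {d : ℤ × ℤ → ℤ}

/-- `z` can be reached from some ball `c ∈ B` by a path of length `ℓ` with
`X ≤ d c + ℓ`. -/
def CanReach (W B : Set (ℤ × ℤ)) (d : ℤ × ℤ → ℤ) (z : ℤ × ℤ) (X : ℤ) : Prop :=
  ∃ c ∈ B, ∃ (ℓ : ℕ) (q : ℕ → ℤ × ℤ),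
    IsPath W ℓ q ∧ q 0 = c ∧ q ℓ = z ∧ X ≤ d c + ℓ

lemma canReach_mono {z : ℤ × ℤ} {X X' : ℤ} (h : CanReach W B d z X) (hle : X' ≤ X) :
    CanReach W B d z X' := by
  obtain ⟨c, hc, ℓ, q, h1, h2, h3, h4⟩ := h
  exact ⟨c, hc, ℓ, q, h1, h2, h3, le_trans hle h4⟩

lemma canReach_self {z : ℤ × ℤ} (hzB : z ∈ B) (hz : z ∈ W) :
    CanReach W B d z (d z) :=
  ⟨z, hzB, 0, fun _ => z, ⟨fun _ _ => hz, fun i hi => absurd hi (by omega)⟩,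
    rfl, rfl, by simp⟩

lemma canReach_single {c z : ℤ × ℤ} (hcB : c ∈ B) (hc : c ∈ W) (hz : z ∈ W)
    (h1 : c.1 < z.1) (h2 : c.2 < z.2) :
    CanReach W B d z (d c + 1) :=
  ⟨c, hcB, 1, fun i => if i = 0 then c else z, isPath_single hc hz h1 h2,
    by simp, by simp, by simp⟩

lemma canReach_step {w z : ℤ × ℤ} {X : ℤ} (h : CanReach W B d w X)
    (h1 : w.1 < z.1) (h2 : w.2 < z.2) (hz : z ∈ W) :
    CanReach W B d z (X + 1) := by
  obtain ⟨c, hc, ℓ, q, hq, hq0, hqℓ, hX⟩ := h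
  refine ⟨c, hc, ℓ + 1, fun i => if i ≤ ℓ then q i else z, ?_, ?_, ?_, ?_⟩
  · constructor
    · intro i hi
      by_cases h : i ≤ ℓ
      · simpa [h] using hq.1 i h
      · simpa [h] using hz
    · intro i hi
      by_cases h : i < ℓ
      · have e1 : i ≤ ℓ := by omega
        have e2 : i + 1 ≤ ℓ := by omega
        simpa [e1, e2] using hq.2 i h
      · have hieq : i = ℓ := by omega
        subst hieq
        have e2 : ¬ (i + 1 ≤ i) := by omega
        simp only [le_refl, if_true, e2, if_false, hqℓ]
        exact ⟨h1, h2⟩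
  · simpa using hq0
  · simp
  · push_cast
    omega

lemma not_nwi_sei (hW : IsPartialPerm n W) (hBW : B ⊆ W) {z : ℤ × ℤ}
    (h1 : Nwi B z) (h2 : Sei B z) : False := by
  obtain ⟨f₁, hf₁B, hy₁, hx₁, hm₁⟩ := h1
  obtain ⟨f₂, hf₂B, hy₂, hx₂, hm₂⟩ := h2
  have : f₁ = f₂ := y_inj hW (hBW hf₁B) (hBW hf₂B)
    (le_antisymm (hm₁ f₂ hf₂B hy₂) (hm₂ f₁ hf₁B hy₁))
  rw [this] at hx₁
  omega

/-- the key induction: any ball on `B` or northwest of `B` admits a maximal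
path rerouted through `B` (relative to the numbering of a channel `A ≤SW B`). -/
lemma psi (hn : 0 < n) (hW : IsPartialPerm n W)
    (hA : IsStream n A) (hAW : A ⊆ W)
    (hB : IsStream n B) (hBW : B ⊆ W) (hBne : B.Nonempty)
    (hd : IsChannelNumbering n W A d)
    (hshiftB : ∀ c ∈ B, d (c.1 + n, c.2 + n) = d c + (streamDensity n B : ℤ))
    (hSW : SWle A B) :
    ∀ k : ℕ, ∀ z : ℤ × ℤ, ∀ p : ℕ → ℤ × ℤ, z ∈ W → IsPath W k p → p 0 ∈ A →
      p k = z → d z = d (p 0) + k → (z ∈ B ∨ Nwi B z) →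
      CanReach W B d z (d z) := by
  intro k
  induction k with
  | zero =>
    intro z p hz hp hp0 hpk hval hside
    rcases hside with hzB | hnwi
    · exact canReach_self hzB hz
    · by_cases hzB : z ∈ B
      · exact canReach_self hzB hz
      exfalso
      have hzA : z ∈ A := hpk ▸ hp0
      obtain ⟨c, hcB, hcx, hcy⟩ := hSW z hzA
      rcases sei_of_witness hn hW hB hBW hBne hz hcB hcx hcy with h | h
      · exact hzB h
      · exact not_nwi_sei hW hBW hnwi h
  | succ k ih =>
    intro z p hz hp hp0 hpk hval hside
    by_cases hzB : z ∈ B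
    · exact canReach_self hzB hz
    have hnwi : Nwi B z := by
      rcases hside with h | h
      · exact absurd h hzB
      · exact h
    set w : ℤ × ℤ := p k with hw
    have hwW : w ∈ W := hp.1 k (by omega)
    have hwlt : w.1 < z.1 ∧ w.2 < z.2 := by
      have := hp.2 k (by omega)
      rw [← hpk]
      exact this
    have hdw : d w = d (p 0) + k := by
      have := prefix_exact hd hz hp hp0 hpk hval (i := k) (by omega)
      exact this
    have hdz : d z = d w + 1 := by
      rw [hval, hdw]
      push_cast
      ring
    by_cases hwB : w ∈ B
    · exact canReach_mono (canReach_single hwB hwW hz hwlt.1 hwlt.2) (by omega)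
    rcases nwi_or_sei hn hW hB hBW hBne hwW hwB with hwNwi | hwSei
    · -- w is also NW: use the induction hypothesis
      have hppre : IsPath W k p := ⟨fun i hi => hp.1 i (by omega), fun i hi => hp.2 i (by omega)⟩
      have hcr := ih w p hwW hppre hp0 rfl hdw (Or.inr hwNwi)
      exact canReach_mono (canReach_step hcr hwlt.1 hwlt.2 hz) (by omega)
    · -- w is SE: geometric rerouting
      obtain ⟨f, hfB, hfy, hfx, hfmin⟩ := hwSei
      -- f.2 < z.2
      have hfz : f.2 < z.2 := by
        rcases lt_trichotomy f.2 z.2 with h | h | h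
        · exact h
        · exact absurd ((y_inj hW (hBW hfB) hz h) ▸ hfB) hzB
        · exfalso
          have hfmin' : ∀ b ∈ B, z.2 < b.2 → f.2 ≤ b.2 := fun b hb hby =>
            hfmin b hb (by omega)
          exact not_nwi_sei hW hBW hnwi ⟨f, hfB, h, by omega, hfmin'⟩
      -- chat : the maximal-y ball of B below z and to the left of z
      set S : Set (ℤ × ℤ) := {c ∈ B | f.2 - 1 < c.2 ∧ c.2 ≤ z.2 - 1 ∧ c.1 < z.1} with hS
      have hSfin : S.Finite := by
        apply Set.Finite.subset (window_finite hW hBW (f.2 - 1) (z.2 - 1))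
        rintro c ⟨h1, h2, h3, _⟩
        exact ⟨h1, h2, h3⟩
      have hfS : f ∈ S := ⟨hfB, by omega, by omega, by omega⟩
      obtain ⟨chat, hchatS, hchatmax⟩ := Set.exists_max_image S (fun c => c.2) hSfin ⟨f, hfS⟩
      have hchatB : chat ∈ B := hchatS.1
      have hchaty : chat.2 < z.2 := by have := hchatS.2.2.1; omega
      have hchatx : chat.1 < z.1 := hchatS.2.2.2
      have hchatf : f.2 ≤ chat.2 := hchatmax f hfS
      have hEmax : ∀ c ∈ B, c.2 < z.2 → c.1 < z.1 → c.2 ≤ chat.2 := by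
        intro c hc h1 h2
        by_cases h : f.2 - 1 < c.2
        · exact hchatmax c ⟨hc, h, by omega, h2⟩
        · omega
      by_cases hcase : ∀ b ∈ B, b.2 < z.2 → b.2 ≤ chat.2
      · -- chat = γ(z): use NW bound
        have hbound := nw_bound hn hW hB hBW hd hshiftB hz hzB hnwi hchatB hchaty hcase
        exact canReach_mono (canReach_single hchatB (hBW hchatB) hz hchatx hchaty) (by omega)
      · push_neg at hcase
        obtain ⟨b₁, hb₁B, hb₁y, hb₁gt⟩ := hcase
        set S' : Set (ℤ × ℤ) := {b ∈ B | chat.2 < b.2 ∧ b.2 ≤ z.2 - 1} with hS'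
        have hS'fin : S'.Finite := window_finite hW hBW chat.2 (z.2 - 1)
        have hb₁S' : b₁ ∈ S' := ⟨hb₁B, by omega, by omega⟩
        obtain ⟨c', hc'S', hc'min⟩ := Set.exists_min_image S' (fun b => b.2) hS'fin ⟨b₁, hb₁S'⟩
        have hc'B : c' ∈ B := hc'S'.1
        have hc'y1 : chat.2 < c'.2 := hc'S'.2.1
        have hc'y2 : c'.2 < z.2 := by have := hc'S'.2.2; omega
        have hc'x : z.1 < c'.1 := by
          rcases lt_trichotomy c'.1 z.1 with h | h | h
          · exact absurd (hEmax c' hc'B hc'y2 h) (by omega)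
          · exact absurd ((x_inj hW (hBW hc'B) hz h) ▸ hc'B) hzB
          · exact h
        -- chat and c' are consecutive in B
        have hcons : ∀ b ∈ B, ¬(chat.2 < b.2 ∧ b.2 < c'.2) := by
          rintro b hbB ⟨h1, h2⟩
          have : b ∈ S' := ⟨hbB, h1, by omega⟩
          exact absurd (hc'min b this) (by omega)
        have hprop : d c' = d chat + 1 :=
          properness hn hW hB hBW hd hshiftB hchatB hc'B hc'y1 hcons
        -- w < c'
        have hwc' : w.1 < c'.1 ∧ w.2 < c'.2 := ⟨by omega, by omega⟩
        have hstep : d w + 1 ≤ d c' := step_le hd hwW (hBW hc'B) hwc'.1 hwc'.2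
        exact canReach_mono (canReach_single hchatB (hBW hchatB) hz hchatx hchaty) (by omega)

/-- rerouting through `B`, for balls on or northwest of `B`. -/
lemma reroute (hn : 0 < n) (hW : IsPartialPerm n W)
    (hA : IsStream n A) (hAW : A ⊆ W)
    (hB : IsStream n B) (hBW : B ⊆ W) (hBne : B.Nonempty)
    (hd : IsChannelNumbering n W A d)
    (hshiftB : ∀ c ∈ B, d (c.1 + n, c.2 + n) = d c + (streamDensity n B : ℤ))
    (hSW : SWle A B) {z : ℤ × ℤ} (hz : z ∈ W) (hside : z ∈ B ∨ Nwi B z) :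
    CanReach W B d z (d z) := by
  obtain ⟨k, p, hp, hp0, hpk, hval⟩ := (hd.2.2 z hz).1
  exact psi hn hW hA hAW hB hBW hBne hd hshiftB hSW k z p hz hp hp0 hpk hval hside

end Reroute

end Stmt16

namespace Stmt16

section LemI
variable {n : ℕ} {W B C₃ : Set (ℤ × ℤ)} {d₂ d₃ : ℤ × ℤ → ℤ}

/-- if `b` is on `B` or southeast of `B`, and the numbering `d₃` of a channel
`C₃` with `B ≤SW C₃` agrees with the numbering `d₂` of `B` on `B`, then
`d₃ b ≤ d₂ b`. -/
lemma lem_i (hn : 0 < n) (hW : IsPartialPerm n W)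
    (hB : IsStream n B) (hBW : B ⊆ W) (hBne : B.Nonempty)
    (hC₃ : IsStream n C₃) (hC₃W : C₃ ⊆ W)
    (hd₂ : IsChannelNumbering n W B d₂) (hd₃ : IsChannelNumbering n W C₃ d₃)
    (hnorm : ∀ c ∈ B, d₃ c = d₂ c)
    (hshiftB₃ : ∀ c ∈ B, d₃ (c.1 + n, c.2 + n) = d₃ c + (streamDensity n B : ℤ))
    (hSW : SWle B C₃)
    {b : ℤ × ℤ} (hb : b ∈ W) (hside : b ∈ B ∨ Sei B b) :
    d₃ b ≤ d₂ b := by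
  classical
  rcases hside with hbB | hsei
  · exact le_of_eq (hnorm b hbB)
  by_cases hbB : b ∈ B
  · exact le_of_eq (hnorm b hbB)
  obtain ⟨k, p, hp, hp0, hpk, hval⟩ := (hd₃.2.2 b hb).1
  by_cases hmeet : ∃ i, i ≤ k ∧ p i ∈ B
  · obtain ⟨i, hik, hpiB⟩ := hmeet
    have hpiW : p i ∈ W := hp.1 i hik
    have hsuffix : d₂ (p i) + ((k - i : ℕ) : ℤ) ≤ d₂ b := by
      refine path_value_le hd₂ hpiW hb (ℓ := k - i) (q := fun j => p (i + j)) ?_ (by simp) ?_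
      · constructor
        · intro j hj; exact hp.1 (i + j) (by omega)
        · intro j hj
          have e : i + (j + 1) = (i + j) + 1 := by omega
          simpa [e] using hp.2 (i + j) (by omega)
      · simp only [show i + (k - i) = k by omega, hpk]
    have hpre : d₃ (p i) = d₃ (p 0) + i := prefix_exact hd₃ hb hp hp0 hpk hval hik
    have hni : d₂ (p i) = d₃ (p i) := (hnorm (p i) hpiB).symm
    have hc : ((k - i : ℕ) : ℤ) = (k : ℤ) - i := by
      push_cast [Nat.cast_sub hik]; ring
    omega
  · push_neg at hmeet
    -- start is NW of B, end is SE of B: find the transition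
    have h0Nwi : Nwi B (p 0) := by
      rcases duality hn hW hB hBW hBne hC₃ hC₃W hSW hp0 with h | h
      · exact absurd h (hmeet 0 (by omega))
      · exact h
    have hkNotNwi : ¬ Nwi B (p k) := by
      intro h
      exact not_nwi_sei hW hBW h (hpk ▸ hsei)
    set I : Finset ℕ := (Finset.range (k + 1)).filter (fun i => Nwi B (p i)) with hI
    have h0I : 0 ∈ I := by
      simp only [hI, Finset.mem_filter, Finset.mem_range]
      exact ⟨by omega, h0Nwi⟩
    have hIne : I.Nonempty := ⟨0, h0I⟩
    set i₀ : ℕ := I.max' hIne with hi₀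
    have hi₀I : i₀ ∈ I := I.max'_mem hIne
    have hi₀k : i₀ ≤ k := by
      have := hi₀I
      simp only [hI, Finset.mem_filter, Finset.mem_range] at this
      omega
    have hi₀Nwi : Nwi B (p i₀) := by
      have := hi₀I
      simp only [hI, Finset.mem_filter, Finset.mem_range] at this
      exact this.2
    have hi₀lt : i₀ < k := by
      rcases lt_or_eq_of_le hi₀k with h | h
      · exact h
      · exact absurd (h ▸ hi₀Nwi) hkNotNwi
    set z : ℤ × ℤ := p i₀ with hz
    set z' : ℤ × ℤ := p (i₀ + 1) with hz'
    have hzW : z ∈ W := hp.1 i₀ hi₀k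
    have hz'W : z' ∈ W := hp.1 (i₀ + 1) (by omega)
    have hz'B : z' ∉ B := hmeet (i₀ + 1) (by omega)
    have hzz' : z.1 < z'.1 ∧ z.2 < z'.2 := hp.2 i₀ hi₀lt
    have hz'NotNwi : ¬ Nwi B z' := by
      intro h
      have : i₀ + 1 ∈ I := by
        simp only [hI, Finset.mem_filter, Finset.mem_range]
        exact ⟨by omega, h⟩
      have := I.le_max' _ this
      omega
    have hz'Sei : Sei B z' := by
      rcases nwi_or_sei hn hW hB hBW hBne hz'W hz'B with h | h
      · exact absurd h hz'NotNwi
      · exact h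
    obtain ⟨f', hf'B, hf'y, hf'x, hf'min⟩ := hz'Sei
    -- γ(z') =: g'
    obtain ⟨g', hg'B, hg'y, hg'max⟩ := exists_gammaBelow hn hW hB hBW hBne z'.2
    have hg'x : g'.1 < z'.1 := by
      have h1 : g'.2 < f'.2 := by omega
      have := stream_y_lt hB hg'B hf'B h1
      omega
    -- γ(z) =: g and the NW bound
    obtain ⟨g, hgB, hgy, hgmax⟩ := exists_gammaBelow hn hW hB hBW hBne z.2
    have hzB : z ∉ B := hmeet i₀ hi₀k
    have hbound : d₃ z ≤ d₃ g :=
      nw_bound hn hW hB hBW hd₃ hshiftB₃ hzW hzB hi₀Nwi hgB hgy hgmax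
    -- d₃ g ≤ d₃ g'
    have hgg' : d₃ g ≤ d₃ g' := by
      have hgy' : g.2 < z'.2 := by omega
      have hle : g.2 ≤ g'.2 := hg'max g hgB hgy'
      rcases lt_or_eq_of_le hle with h | h
      · have := mono_yC hB hBW hd₃ hgB hg'B h
        omega
      · rw [y_inj hW (hBW hgB) (hBW hg'B) h]
    -- splice: path g' → z' → … → b
    have hsplice : d₂ g' + ((k - i₀ : ℕ) : ℤ) ≤ d₂ b := by
      refine path_value_le hd₂ (hBW hg'B) hb (ℓ := k - i₀)
        (q := fun j => if j = 0 then g' else p (i₀ + j)) ?_ (by simp) ?_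
      · constructor
        · intro j hj
          by_cases h : j = 0
          · simpa [h] using hBW hg'B
          · simp only [h, if_false]
            exact hp.1 (i₀ + j) (by omega)
        · intro j hj
          by_cases h : j = 0
          · subst h
            simp only [if_true, show (0:ℕ) + 1 ≠ 0 by omega, if_false]
            exact ⟨hg'x, hg'y⟩
          · have e : i₀ + (j + 1) = (i₀ + j) + 1 := by omega
            simp only [h, if_false, show j + 1 ≠ 0 by omega]
            simpa [e] using hp.2 (i₀ + j) (by omega)
      · have hne : k - i₀ ≠ 0 := by omega
        simp only [hne, if_false, show i₀ + (k - i₀) = k by omega, hpk]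
    have hg'n : d₂ g' = d₃ g' := (hnorm g' hg'B).symm
    have hpre : d₃ z = d₃ (p 0) + i₀ := prefix_exact hd₃ hb hp hp0 hpk hval hi₀k
    have hc : ((k - i₀ : ℕ) : ℤ) = (k : ℤ) - i₀ := by
      push_cast [Nat.cast_sub hi₀k]; ring
    omega

end LemI

end Stmt16


/-- Triangle inequality for distances between channels: given channels
`C₁, C₂, C₃` with channel numberings normalized pairwise (agreeing on the
smaller channel), the distances satisfy `h₁₃ ≤ h₁₂ + h₂₃`, with equality
whenever `C₁ ≤_SW C₂ ≤_SW C₃`. -/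
theorem stmt16 (n : ℕ) (hn : 0 < n) (W C₁ C₂ C₃ : Set (ℤ × ℤ))
    (hW : IsPartialPerm n W)
    (hC₁ : IsChannel n W C₁) (hC₂ : IsChannel n W C₂) (hC₃ : IsChannel n W C₃)
    (d₁ d₂ d₃ d₃' : ℤ × ℤ → ℤ)
    (hd₁ : IsChannelNumbering n W C₁ d₁)
    (hd₂ : IsChannelNumbering n W C₂ d₂) (hag₁₂ : ∃ b ∈ C₁, d₂ b = d₁ b)
    (hd₃ : IsChannelNumbering n W C₃ d₃) (hag₂₃ : ∃ b ∈ C₂, d₃ b = d₂ b)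
    (hd₃' : IsChannelNumbering n W C₃ d₃') (hag₁₃ : ∃ b ∈ C₁, d₃' b = d₁ b)
    (h₁₂ h₂₃ h₁₃ : ℤ)
    (hh₁₂ : ∃ b ∈ C₂, |d₂ b - d₁ b| = h₁₂)
    (hh₂₃ : ∃ b ∈ C₃, |d₃ b - d₂ b| = h₂₃)
    (hh₁₃ : ∃ b ∈ C₃, |d₃' b - d₁ b| = h₁₃) :
    h₁₃ ≤ h₁₂ + h₂₃ ∧ (SWle C₁ C₂ → SWle C₂ C₃ → h₁₃ = h₁₂ + h₂₃) := by
  classical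
  open Stmt16 in
  -- densities of channels agree
  have hdeq : ∀ {Ca Cb : Set (ℤ × ℤ)}, IsChannel n W Ca → IsChannel n W Cb →
      streamDensity n Ca = streamDensity n Cb := by
    intro Ca Cb ha hb
    exact le_antisymm (hb.2.2 Ca ha.1 ha.2.1) (ha.2.2 Cb hb.1 hb.2.1)
  -- shift facts for any numbering on any channel
  have hshift : ∀ {Cd : Set (ℤ × ℤ)}, IsChannel n W Cd → ∀ {d : ℤ × ℤ → ℤ},
      IsChannelNumbering n W Cd d → ∀ {Cj : Set (ℤ × ℤ)}, IsChannel n W Cj →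
      ∀ c ∈ Cj, d (c.1 + n, c.2 + n) = d c + (streamDensity n Cj : ℤ) := by
    intro Cd hCd d hd Cj hCj c hc
    have h := Stmt16.num_shift hW hCd.1 hd (hCj.2.1 hc)
    rw [hdeq hCd hCj] at h
    exact h
  -- constancy of differences of numberings on any channel
  have hconst : ∀ {Ca Cb : Set (ℤ × ℤ)}, IsChannel n W Ca → IsChannel n W Cb →
      ∀ {da db : ℤ × ℤ → ℤ}, IsChannelNumbering n W Ca da →
      IsChannelNumbering n W Cb db → ∀ {Cj : Set (ℤ × ℤ)}, IsChannel n W Cj →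
      ∀ c ∈ Cj, ∀ c' ∈ Cj, db c' - da c' = db c - da c := by
    intro Ca Cb hCa hCb da db hda hdb Cj hCj c hc c' hc'
    exact Stmt16.constancy hn hW hCj.1 hCj.2.1 hda hdb
      (hshift hCa hda hCj) (hshift hCb hdb hCj) hc hc'
  obtain ⟨b1, hb1C₁, hb1⟩ := hag₁₂
  obtain ⟨b2, hb2C₂, hb2⟩ := hag₂₃
  obtain ⟨b3, hb3C₁, hb3⟩ := hag₁₃
  obtain ⟨w12, hw12C₂, hw12⟩ := hh₁₂
  obtain ⟨w23, hw23C₃, hw23⟩ := hh₂₃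
  obtain ⟨w13, hw13C₃, hw13⟩ := hh₁₃
  have hb1W : b1 ∈ W := hC₁.2.1 hb1C₁
  have hw12W : w12 ∈ W := hC₂.2.1 hw12C₂
  have hw23W : w23 ∈ W := hC₃.2.1 hw23C₃
  have hw13W : w13 ∈ W := hC₃.2.1 hw13C₃
  -- normalizations
  have hnorm21 : ∀ c ∈ C₁, d₂ c = d₁ c := by
    intro c hc
    have := hconst hC₁ hC₂ hd₁ hd₂ hC₁ b1 hb1C₁ c hc
    omega
  have hnorm32 : ∀ c ∈ C₂, d₃ c = d₂ c := by
    intro c hc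
    have := hconst hC₂ hC₃ hd₂ hd₃ hC₂ b2 hb2C₂ c hc
    omega
  have hnorm31 : ∀ c ∈ C₁, d₃' c = d₁ c := by
    intro c hc
    have := hconst hC₁ hC₃ hd₁ hd₃' hC₁ b3 hb3C₁ c hc
    omega
  -- the normalized distances
  set a12 : ℤ := d₂ w12 - d₁ w12 with ha12
  set a23 : ℤ := d₃ w23 - d₂ w23 with ha23
  set a13 : ℤ := d₃' w13 - d₁ w13 with ha13
  have ha12nn : 0 ≤ a12 := by
    obtain ⟨c, hc, hle⟩ := Stmt16.sandwich_lower hC₁.2.1 hd₁ hd₂ hw12W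
    have := hnorm21 c hc
    omega
  have ha23nn : 0 ≤ a23 := by
    obtain ⟨c, hc, hle⟩ := Stmt16.sandwich_lower hC₂.2.1 hd₂ hd₃ hw23W
    have := hnorm32 c hc
    omega
  have ha13nn : 0 ≤ a13 := by
    obtain ⟨c, hc, hle⟩ := Stmt16.sandwich_lower hC₁.2.1 hd₁ hd₃' hw13W
    have := hnorm31 c hc
    omega
  have hv12 : h₁₂ = a12 := by rw [← hw12, abs_of_nonneg ha12nn]
  have hv23 : h₂₃ = a23 := by rw [← hw23, abs_of_nonneg ha23nn]
  have hv13 : h₁₃ = a13 := by rw [← hw13, abs_of_nonneg ha13nn]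
  set u : ℤ := d₂ w13 - d₁ w13 with hu
  set v : ℤ := d₃ b1 - d₂ b1 with hv
  have hule : u ≤ a12 := by
    obtain ⟨c, hc, hle⟩ := Stmt16.sandwich_lower hC₂.2.1 hd₂ hd₁ hw13W
    have := hconst hC₁ hC₂ hd₁ hd₂ hC₂ c hc w12 hw12C₂
    omega
  have hvnn : 0 ≤ v := by
    obtain ⟨c, hc, hle⟩ := Stmt16.sandwich_lower hC₂.2.1 hd₂ hd₃ hb1W
    have := hnorm32 c hc
    omega
  -- the identity a13 = a23 + u - v via the global constant between d₃' and d₃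
  have hglobal : ∀ b ∈ W, d₃' b = d₃ b + (d₃' w13 - d₃ w13) :=
    fun b hb => Stmt16.same_global hn hW hC₃.1 hC₃.2.1 hd₃ hd₃' hw13C₃ hb
  have hc₀ : d₃' w13 - d₃ w13 = -v := by
    have h1 := hglobal b1 hb1W
    have h2 := hnorm31 b1 hb1C₁
    have h3 := hnorm21 b1 hb1C₁
    omega
  have ha23' : d₃ w13 - d₂ w13 = a23 := by
    have := hconst hC₂ hC₃ hd₂ hd₃ hC₃ w23 hw23C₃ w13 hw13C₃
    omega
  have hiden : a13 = a23 + u - v := by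
    have h1 := hglobal w13 hw13W
    omega
  constructor
  · omega
  · intro hsw12 hsw23
    have hC₂ne : C₂.Nonempty := ⟨w12, hw12C₂⟩
    -- (i): v ≤ 0
    have hvle : v ≤ 0 := by
      obtain ⟨cs, hcsC₂, hcsx, hcsy⟩ := hsw12 b1 hb1C₁
      rcases Stmt16.sei_of_witness hn hW hC₂.1 hC₂.2.1 hC₂ne hb1W hcsC₂ hcsx hcsy with h | h
      · have := hnorm32 b1 h
        omega
      · have := Stmt16.lem_i hn hW hC₂.1 hC₂.2.1 hC₂ne hC₃.1 hC₃.2.1 hd₂ hd₃ hnorm32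
          (hshift hC₃ hd₃ hC₂) hsw23 hb1W (Or.inr h)
        omega
    -- (ii): a12 ≤ u
    have huge : a12 ≤ u := by
      rcases Stmt16.duality hn hW hC₂.1 hC₂.2.1 hC₂ne hC₃.1 hC₃.2.1 hsw23 hw13C₃ with h | h
      · have := hconst hC₁ hC₂ hd₁ hd₂ hC₂ w12 hw12C₂ w13 h
        omega
      · have hcr := Stmt16.reroute hn hW hC₁.1 hC₁.2.1 hC₂.1 hC₂.2.1 hC₂ne hd₁
          (hshift hC₁ hd₁ hC₂) hsw12 hw13W (Or.inr h)
        obtain ⟨c, hcC₂, ℓ, q, hq, hq0, hqℓ, hX⟩ := hcr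
        have hpv := Stmt16.path_value_le hd₂ (hC₂.2.1 hcC₂) hw13W hq hq0 hqℓ
        have := hconst hC₁ hC₂ hd₁ hd₂ hC₂ c hcC₂ w12 hw12C₂
        omega
    omega
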